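/- For a bounded linear operator T on a complex Hilbert space, w(T)² ≤ (1/2)·‖T‖·‖T̃‖ + (1/4)·‖T*T + TT*‖, where T̃ is the Aluthge transform of T. -/

import Mathlib

open scoped NNReal ENNReal
open ContinuousLinearMap

set_option synthInstance.maxHeartbeats 1000000
set_option maxHeartbeats 1000000


variable {H : Type*} [NormedAddCommGroup H] [InnerProductSpace ℂ H] [CompleteSpace H]

/-- The numerical radius of a bounded linear operator. -/
noncomputable def numRadius (T : H →L[ℂ] H) : ℝ :=
  ⨆ x : {x : H // ‖x‖ = 1}, ‖(inner ℂ (T x) x : ℂ)‖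

/-- The modulus `|T| = (T*T)^{1/2}`. -/
noncomputable def opAbs (T : H →L[ℂ] H) : H →L[ℂ] H :=
  CFC.sqrt (adjoint T * T)

/-- The `t`-Aluthge transform `|T|^t U |T|^{1-t}` (with `|T|^0` the support
projection, i.e. `U*U` for the polar partial isometry `U`). -/
noncomputable def aluthge (T U : H →L[ℂ] H) (t : ℝ≥0) : H →L[ℂ] H :=
  CFC.nnrpow (opAbs T) t * U * CFC.nnrpow (opAbs T) (1 - t)

local notation "⟪" x ", " y "⟫" => @inner ℂ _ _ x y

lemma buzano (a b e : H) (he : ‖e‖ = 1) :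
    ‖(⟪a, e⟫ * ⟪e, b⟫ : ℂ)‖ ≤ (‖a‖ * ‖b‖ + ‖(⟪a, b⟫ : ℂ)‖) / 2 := by
  set r : H := (2 * ⟪e, a⟫) • e - a with hr
  have hconj2 : (starRingEnd ℂ) 2 = 2 := Complex.conj_ofNat 2
  have hrb : ⟪r, b⟫ = 2 * ⟪a, e⟫ * ⟪e, b⟫ - ⟪a, b⟫ := by
    rw [hr, inner_sub_left, inner_smul_left, map_mul, inner_conj_symm, hconj2]
  have hrn : ‖r‖ = ‖a‖ := by
    have h1 : ‖r‖ ^ 2 = ‖a‖ ^ 2 := by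
      have hc : ⟪(2 * ⟪e, a⟫) • e, a⟫ = 2 * ((‖(⟪e, a⟫ : ℂ)‖ : ℂ)) ^ 2 := by
        rw [inner_smul_left, map_mul, hconj2, mul_assoc, RCLike.conj_mul]
        push_cast
        ring_nf
        rfl
      have hre : RCLike.re ⟪(2 * ⟪e, a⟫) • e, a⟫ = 2 * ‖(⟪e, a⟫ : ℂ)‖ ^ 2 := by
        rw [hc]
        norm_cast
      rw [hr, norm_sub_sq (𝕜 := ℂ), hre, norm_smul, he, mul_one, norm_mul]
      have h2n : ‖(2:ℂ)‖ = 2 := by simp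
      rw [h2n]; ring
    nlinarith [norm_nonneg r, norm_nonneg a]
  have h2 : 2 * ‖(⟪a, e⟫ * ⟪e, b⟫ : ℂ)‖ ≤ ‖a‖ * ‖b‖ + ‖(⟪a, b⟫ : ℂ)‖ := by
    have key : (2 : ℂ) * (⟪a, e⟫ * ⟪e, b⟫) = ⟪a, b⟫ + ⟪r, b⟫ := by rw [hrb]; ring
    calc 2 * ‖(⟪a, e⟫ * ⟪e, b⟫ : ℂ)‖ = ‖(2:ℂ) * (⟪a, e⟫ * ⟪e, b⟫)‖ := by
          simp
      _ = ‖(⟪a, b⟫ + ⟪r, b⟫ : ℂ)‖ := by rw [key]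
      _ ≤ ‖(⟪a, b⟫ : ℂ)‖ + ‖(⟪r, b⟫ : ℂ)‖ := norm_add_le _ _
      _ ≤ ‖(⟪a, b⟫ : ℂ)‖ + ‖r‖ * ‖b‖ := by
          gcongr; exact norm_inner_le_norm r b
      _ = ‖a‖ * ‖b‖ + ‖(⟪a, b⟫ : ℂ)‖ := by rw [hrn]; ring
  linarith

lemma opAbs_nonneg (T : H →L[ℂ] H) : 0 ≤ opAbs T := CFC.sqrt_nonneg _

lemma opAbs_sa (T : H →L[ℂ] H) : IsSelfAdjoint (opAbs T) :=
  IsSelfAdjoint.of_nonneg (opAbs_nonneg T)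

lemma adjoint_mul_self_nonneg (T : H →L[ℂ] H) : 0 ≤ adjoint T * T := by
  rw [← star_eq_adjoint]; exact star_mul_self_nonneg T

lemma opAbs_mul_self (T : H →L[ℂ] H) : opAbs T * opAbs T = adjoint T * T :=
  CFC.sqrt_mul_sqrt_self _ (adjoint_mul_self_nonneg T)

lemma inner_opAbs_apply (T : H →L[ℂ] H) (x : H) :
    ⟪opAbs T x, opAbs T x⟫ = ⟪T x, T x⟫ := by
  have h1 : ⟪opAbs T x, opAbs T x⟫ = ⟪x, (opAbs T * opAbs T) x⟫ := by
    nth_rewrite 1 [← (opAbs_sa T).adjoint_eq]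
    rw [ContinuousLinearMap.mul_apply]
    exact adjoint_inner_left (opAbs T) (opAbs T x) x
  rw [h1, opAbs_mul_self, ContinuousLinearMap.mul_apply]
  exact adjoint_inner_right T x (T x)

lemma norm_opAbs_apply (T : H →L[ℂ] H) (x : H) : ‖opAbs T x‖ = ‖T x‖ := by
  have h := inner_opAbs_apply T x
  rw [inner_self_eq_norm_sq_to_K, inner_self_eq_norm_sq_to_K] at h
  have h2 : ‖opAbs T x‖ ^ 2 = ‖T x‖ ^ 2 := by exact_mod_cast h
  calc ‖opAbs T x‖ = √(‖opAbs T x‖ ^ 2) := (Real.sqrt_sq (norm_nonneg _)).symm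
    _ = √(‖T x‖ ^ 2) := by rw [h2]
    _ = ‖T x‖ := Real.sqrt_sq (norm_nonneg _)

lemma norm_opAbs (T : H →L[ℂ] H) : ‖opAbs T‖ = ‖T‖ := by
  refine le_antisymm ?_ ?_ <;>
    refine ContinuousLinearMap.opNorm_le_bound _ (norm_nonneg _) fun x => ?_
  · rw [norm_opAbs_apply]; exact le_opNorm T x
  · rw [← norm_opAbs_apply]; exact le_opNorm (opAbs T) x

lemma ker_opAbs (T : H →L[ℂ] H) : LinearMap.ker (opAbs T : H →ₗ[ℂ] H) = LinearMap.ker (T : H →ₗ[ℂ] H) := by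
  ext x
  simp only [LinearMap.mem_ker, ContinuousLinearMap.coe_coe]
  constructor <;> intro h
  · have := norm_opAbs_apply T x
    rw [h, norm_zero] at this
    exact norm_eq_zero.mp this.symm
  · have := norm_opAbs_apply T x
    rw [h, norm_zero] at this
    exact norm_eq_zero.mp this


lemma norm_U_apply_le (T U : H →L[ℂ] H) (hU : T = U * opAbs T)
    (hker : LinearMap.ker (U : H →ₗ[ℂ] H) = LinearMap.ker (T : H →ₗ[ℂ] H)) (y : H) : ‖U y‖ ≤ ‖y‖ := by
  set A := opAbs T with hA
  set S : Submodule ℂ H := (LinearMap.range (A : H →ₗ[ℂ] H)).topologicalClosure with hS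
  have hiso : ∀ v ∈ S, ‖U v‖ = ‖v‖ := by
    have hclosed : IsClosed {v : H | ‖U v‖ = ‖v‖} :=
      isClosed_eq (continuous_norm.comp U.continuous) continuous_norm
    have hsub : (LinearMap.range (A : H →ₗ[ℂ] H) : Set H) ⊆ {v : H | ‖U v‖ = ‖v‖} := by
      rintro _ ⟨z, rfl⟩
      show ‖U (A z)‖ = ‖A z‖
      have hUz : U (A z) = T z := by rw [hU]; rfl
      rw [hUz, hA, norm_opAbs_apply]
    intro v hv
    have : (S : Set H) ⊆ {v : H | ‖U v‖ = ‖v‖} := by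
      rw [hS, Submodule.topologicalClosure_coe]
      exact closure_minimal hsub hclosed
    exact this hv
  have hOrth : ∀ w ∈ Sᗮ, U w = 0 := by
    intro w hw
    have hzero : ∀ z : H, ⟪z, A w⟫ = 0 := by
      intro z
      have h1 : ⟪z, A w⟫ = ⟪A z, w⟫ := by
        rw [hA]
        nth_rewrite 1 [← (opAbs_sa T).adjoint_eq]
        exact adjoint_inner_right (opAbs T) z w
      rw [h1]
      refine (Submodule.mem_orthogonal S w).mp hw (A z) ?_
      exact Submodule.le_topologicalClosure _ (LinearMap.mem_range_self _ z)
    have hAw : A w = 0 := by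
      have := hzero (A w)
      rwa [inner_self_eq_zero] at this
    have hwker : w ∈ LinearMap.ker (U : H →ₗ[ℂ] H) := by
      rw [hker, ← ker_opAbs T]
      exact hAw
    exact hwker
  haveI : CompleteSpace S := (Submodule.isClosed_topologicalClosure _).completeSpace_coe
  obtain ⟨s, hs, t, ht, rfl⟩ := S.exists_add_mem_mem_orthogonal y
  have hUt : U t = 0 := hOrth t ht
  have h1 : ‖U (s + t)‖ = ‖s‖ := by
    rw [map_add, hUt, add_zero, hiso s hs]
  have hst : ⟪s, t⟫ = 0 := Submodule.inner_right_of_mem_orthogonal hs ht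
  have h2 : ‖s + t‖ * ‖s + t‖ = ‖s‖ * ‖s‖ + ‖t‖ * ‖t‖ :=
    norm_add_sq_eq_norm_sq_add_norm_sq_of_inner_eq_zero s t hst
  rw [h1]
  nlinarith [norm_nonneg s, norm_nonneg t, norm_nonneg (s + t)]

lemma norm_sq_le' (T U : H →L[ℂ] H) (hU : T = U * opAbs T)
    (hker : LinearMap.ker (U : H →ₗ[ℂ] H) = LinearMap.ker (T : H →ₗ[ℂ] H)) :
    ‖T * T‖ ≤ ‖T‖ * ‖aluthge T U (1 / 2)‖ := by
  set B : H →L[ℂ] H := CFC.sqrt (opAbs T) with hBdef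
  have hBB : B * B = opAbs T := CFC.sqrt_mul_sqrt_self _ (opAbs_nonneg T)
  have hpow : CFC.nnrpow (opAbs T) (1 / 2) = B := by
    rw [hBdef, CFC.sqrt_eq_nnrpow, CFC.nnrpow_eq_pow]
  have hhalf : (1 : ℝ≥0) - 1 / 2 = 1 / 2 := by
    have h : (1 / 2 : ℝ≥0) ≤ 1 := by norm_num
    rw [← NNReal.coe_inj, NNReal.coe_sub h]; norm_num
  have halu : aluthge T U (1 / 2) = B * U * B := by
    rw [aluthge, hhalf, hpow]
  have hfact : T * T = U * (B * (aluthge T U (1 / 2) * B)) := by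
    rw [halu, hU, ← hBB]
    noncomm_ring
  have hUn : ‖U‖ ≤ 1 :=
    ContinuousLinearMap.opNorm_le_bound U zero_le_one fun y => by
      simpa using norm_U_apply_le T U hU hker y
  have hBn : ‖B‖ * ‖B‖ = ‖T‖ := by
    have h1 : ‖opAbs T‖ = ‖star B * B‖ := by
      rw [(IsSelfAdjoint.of_nonneg (CFC.sqrt_nonneg _)).star_eq, hBB]
    rw [CStarRing.norm_star_mul_self] at h1
    rw [← h1, norm_opAbs]
  calc ‖T * T‖ = ‖U * (B * (aluthge T U (1 / 2) * B))‖ := by rw [← hfact]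
    _ ≤ ‖U‖ * ‖B * (aluthge T U (1 / 2) * B)‖ := norm_mul_le _ _
    _ ≤ ‖U‖ * (‖B‖ * ‖aluthge T U (1 / 2) * B‖) := by
        gcongr; exact norm_mul_le _ _
    _ ≤ ‖U‖ * (‖B‖ * (‖aluthge T U (1 / 2)‖ * ‖B‖)) := by
        gcongr
        exact norm_mul_le _ _
    _ ≤ 1 * (‖B‖ * (‖aluthge T U (1 / 2)‖ * ‖B‖)) := by
        exact mul_le_mul_of_nonneg_right hUn (by positivity)
    _ = ‖T‖ * ‖aluthge T U (1 / 2)‖ := by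
        rw [one_mul, ← hBn]; ring


/-- w(T)² ≤ (1/2)‖T‖‖T̃‖ + (1/4)‖T*T + TT*‖. -/
theorem numRadius_sq_le_aluthge_half_bound (T U : H →L[ℂ] H)
    (hU : T = U * opAbs T) (hker : LinearMap.ker (U : H →ₗ[ℂ] H) = LinearMap.ker (T : H →ₗ[ℂ] H)) :
    numRadius T ^ 2 ≤ (1 / 2) * ‖T‖ * ‖aluthge T U (1 / 2)‖
      + (1 / 4) * ‖adjoint T * T + T * adjoint T‖ := by
  set C : ℝ := (1 / 2) * ‖T‖ * ‖aluthge T U (1 / 2)‖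
      + (1 / 4) * ‖adjoint T * T + T * adjoint T‖ with hC
  have hC0 : 0 ≤ C := by positivity
  -- pointwise bound
  have key : ∀ x : H, ‖x‖ = 1 → ‖(⟪T x, x⟫ : ℂ)‖ ^ 2 ≤ C := by
    intro x hx
    have e1 : (⟪x, adjoint T x⟫ : ℂ) = ⟪T x, x⟫ := adjoint_inner_right T x x
    have e2 : ‖(⟪T x, x⟫ : ℂ)‖ ^ 2 = ‖(⟪T x, x⟫ * ⟪x, adjoint T x⟫ : ℂ)‖ := by
      rw [e1, norm_mul]; ring
    have hbuz := buzano (T x) (adjoint T x) x hx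
    -- second term: inner (T x) (adjoint T x) = inner ((T*T) x) x
    have e3 : (⟪T x, adjoint T x⟫ : ℂ) = ⟪(T * T) x, x⟫ := by
      rw [ContinuousLinearMap.mul_apply]
      exact adjoint_inner_right T (T x) x
    have h4 : ‖(⟪T x, adjoint T x⟫ : ℂ)‖ ≤ ‖T‖ * ‖aluthge T U (1 / 2)‖ := by
      rw [e3]
      calc ‖(⟪(T * T) x, x⟫ : ℂ)‖ ≤ ‖(T * T) x‖ * ‖x‖ := norm_inner_le_norm _ _
        _ ≤ ‖T * T‖ * ‖x‖ * ‖x‖ := by gcongr; exact le_opNorm _ x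
        _ = ‖T * T‖ := by rw [hx]; ring
        _ ≤ ‖T‖ * ‖aluthge T U (1 / 2)‖ := norm_sq_le' T U hU hker
    -- first term
    set S : H →L[ℂ] H := adjoint T * T + T * adjoint T with hS
    have h5 : ‖T x‖ ^ 2 + ‖adjoint T x‖ ^ 2 ≤ ‖S‖ := by
      have i1 : (⟪S x, x⟫ : ℂ) = ((‖T x‖ ^ 2 + ‖adjoint T x‖ ^ 2 : ℝ) : ℂ) := by
        have j1 : (⟪adjoint T (T x), x⟫ : ℂ) = ⟪T x, T x⟫ := adjoint_inner_left T x (T x)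
        have j2 : (⟪T (adjoint T x), x⟫ : ℂ) = ⟪adjoint T x, adjoint T x⟫ := by
          nth_rewrite 1 [← ContinuousLinearMap.adjoint_adjoint T]
          exact adjoint_inner_left (adjoint T) x (adjoint T x)
        rw [hS]
        rw [ContinuousLinearMap.add_apply, inner_add_left,
          ContinuousLinearMap.mul_apply, ContinuousLinearMap.mul_apply]
        rw [j1, j2, inner_self_eq_norm_sq_to_K, inner_self_eq_norm_sq_to_K]
        push_cast
        ring_nf
        try rfl
      have i2 : ‖(⟪S x, x⟫ : ℂ)‖ = ‖T x‖ ^ 2 + ‖adjoint T x‖ ^ 2 := by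
        rw [i1, Complex.norm_real, Real.norm_of_nonneg (by positivity)]
      calc ‖T x‖ ^ 2 + ‖adjoint T x‖ ^ 2 = ‖(⟪S x, x⟫ : ℂ)‖ := i2.symm
        _ ≤ ‖S x‖ * ‖x‖ := norm_inner_le_norm _ _
        _ ≤ ‖S‖ * ‖x‖ * ‖x‖ := by gcongr; exact le_opNorm _ x
        _ = ‖S‖ := by rw [hx]; ring
    have h6 : ‖T x‖ * ‖adjoint T x‖ ≤ ‖S‖ / 2 := by nlinarith [sq_nonneg (‖T x‖ - ‖adjoint T x‖)]
    rw [e2]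
    calc ‖(⟪T x, x⟫ * ⟪x, adjoint T x⟫ : ℂ)‖
        ≤ (‖T x‖ * ‖adjoint T x‖ + ‖(⟪T x, adjoint T x⟫ : ℂ)‖) / 2 := hbuz
      _ ≤ (‖S‖ / 2 + ‖T‖ * ‖aluthge T U (1 / 2)‖) / 2 := by gcongr
      _ = C := by rw [hC, hS]; ring
  -- conclude
  have hub : numRadius T ≤ Real.sqrt C := by
    apply Real.iSup_le _ (Real.sqrt_nonneg C)
    rintro ⟨x, hx⟩
    have h := key x hx
    calc ‖(⟪T x, x⟫ : ℂ)‖ = √(‖(⟪T x, x⟫ : ℂ)‖ ^ 2) := (Real.sqrt_sq (norm_nonneg _)).symm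
      _ ≤ √C := Real.sqrt_le_sqrt h
  have h0 : 0 ≤ numRadius T := Real.iSup_nonneg fun p => norm_nonneg _
  calc numRadius T ^ 2 ≤ Real.sqrt C ^ 2 := pow_le_pow_left₀ h0 hub 2
    _ = C := Real.sq_sqrt hC0
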